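/- (Appendix, equation (12c).) For every subcarrier p ∈ {0,…,N−1}, E[ conj(h̄(p)) · H̄^{ISI}_{pp} ] = τ_av/N. -/

import Mathlib

open Finset MeasureTheory

/-- Frequency-domain channel coefficient `h̄(p) = ∑_{ℓ=0}^{L-1} h(ℓ)·e^{-2πiℓp/N}`. -/
noncomputable def hBar {Ω : Type*} (N L : ℕ) (h : ℕ → Ω → ℂ) (p : ℕ) (ω : Ω) : ℂ :=
  ∑ ℓ ∈ range L, h ℓ ω *
    Complex.exp (-(2 * (Real.pi : ℂ) * Complex.I * (ℓ : ℂ) * (p : ℂ)) / (N : ℂ))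

/-- Frequency-domain ISI matrix entry
`H̄^{ISI}_{pq} = (1/N)·∑_{n=0}^{N-1} ∑_{ℓ=0}^{L-1} h(ℓ)·e^{2πi(nq-ℓq-np)/N}·𝟙[n < ℓ]`. -/
noncomputable def Hisi {Ω : Type*} (N L : ℕ) (h : ℕ → Ω → ℂ) (p q : ℕ) (ω : Ω) : ℂ :=
  (1 / (N : ℂ)) * ∑ n ∈ range N, ∑ ℓ ∈ range L,
    h ℓ ω * Complex.exp (2 * (Real.pi : ℂ) * Complex.I *
      ((((n * q : ℕ) : ℤ) - ((ℓ * q : ℕ) : ℤ) - ((n * p : ℕ) : ℤ) : ℤ) : ℂ) / (N : ℂ)) *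
    (if n < ℓ then 1 else 0)

/-- Appendix, equation (12c): `E[conj(h̄(p)) · H̄^{ISI}_{pp}] = τ_av/N`. -/
theorem stmt3 {Ω : Type*} [MeasurableSpace Ω] (μ : Measure Ω) [IsProbabilityMeasure μ]
    (N L : ℕ) (hL1 : 1 ≤ L) (hLN : L ≤ N)
    (ρ : ℕ → ℝ) (hnn : ∀ ℓ, 0 ≤ ρ ℓ) (hsum : ∑ ℓ ∈ range L, ρ ℓ = 1)
    (h : ℕ → Ω → ℂ)
    (hint : ∀ ℓ ℓ', ℓ < L → ℓ' < L →
      Integrable (fun ω => h ℓ ω * (starRingEnd ℂ) (h ℓ' ω)) μ)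
    (hmean : ∀ ℓ, ℓ < L → ∫ ω, h ℓ ω ∂μ = 0)
    (hcov : ∀ ℓ ℓ', ℓ < L → ℓ' < L →
      ∫ ω, h ℓ ω * (starRingEnd ℂ) (h ℓ' ω) ∂μ = if ℓ = ℓ' then ((ρ ℓ : ℝ) : ℂ) else 0)
    (p : ℕ) (hp : p < N) :
    ∫ ω, (starRingEnd ℂ) (hBar N L h p ω) * Hisi N L h p p ω ∂μ
      = ((∑ ℓ ∈ range L, (ℓ : ℝ) * ρ ℓ : ℝ) : ℂ) / (N : ℂ) := by
  have hN : (N : ℂ) ≠ 0 := Nat.cast_ne_zero.mpr (by omega)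
  set a : ℕ → ℂ := fun ℓ =>
    (starRingEnd ℂ) (Complex.exp (-(2 * (Real.pi : ℂ) * Complex.I * (ℓ : ℂ) * (p : ℂ)) / (N : ℂ)))
    with ha
  set b : ℕ → ℂ := fun ℓ => (1 / (N : ℂ)) * ∑ n ∈ range N,
      Complex.exp (2 * (Real.pi : ℂ) * Complex.I *
        ((((n * p : ℕ) : ℤ) - ((ℓ * p : ℕ) : ℤ) - ((n * p : ℕ) : ℤ) : ℤ) : ℂ) / (N : ℂ)) *
      (if n < ℓ then 1 else 0) with hb
  have hH : ∀ ω, Hisi N L h p p ω = ∑ ℓ ∈ range L, b ℓ * h ℓ ω := by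
    intro ω
    simp only [Hisi, hb]
    rw [Finset.sum_comm, Finset.mul_sum]
    refine Finset.sum_congr rfl fun ℓ _ => ?_
    simp only [mul_assoc]
    rw [← Finset.mul_sum]
    ring
  have hfun : ∀ ω, (starRingEnd ℂ) (hBar N L h p ω) * Hisi N L h p p ω
      = ∑ ℓ' ∈ range L, ∑ ℓ ∈ range L,
          (a ℓ' * b ℓ) * (h ℓ ω * (starRingEnd ℂ) (h ℓ' ω)) := by
    intro ω
    rw [hH]
    simp only [hBar, map_sum, map_mul]
    rw [Finset.sum_mul_sum]
    refine Finset.sum_congr rfl fun ℓ' _ => Finset.sum_congr rfl fun ℓ _ => ?_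
    simp only [ha]
    ring
  have hint' : ∀ ℓ' ∈ range L, ∀ ℓ ∈ range L,
      Integrable (fun ω => (a ℓ' * b ℓ) * (h ℓ ω * (starRingEnd ℂ) (h ℓ' ω))) μ := by
    intro ℓ' hℓ' ℓ hℓ
    exact (hint ℓ ℓ' (mem_range.mp hℓ) (mem_range.mp hℓ')).const_mul _
  calc ∫ ω, (starRingEnd ℂ) (hBar N L h p ω) * Hisi N L h p p ω ∂μ
      = ∫ ω, ∑ ℓ' ∈ range L, ∑ ℓ ∈ range L,
          (a ℓ' * b ℓ) * (h ℓ ω * (starRingEnd ℂ) (h ℓ' ω)) ∂μ := by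
        simp_rw [hfun]
    _ = ∑ ℓ' ∈ range L, ∑ ℓ ∈ range L,
          ∫ ω, (a ℓ' * b ℓ) * (h ℓ ω * (starRingEnd ℂ) (h ℓ' ω)) ∂μ := by
        rw [integral_finset_sum _ (fun ℓ' hℓ' =>
          integrable_finset_sum _ (fun ℓ hℓ => hint' ℓ' hℓ' ℓ hℓ))]
        exact Finset.sum_congr rfl fun ℓ' hℓ' =>
          integral_finset_sum _ (fun ℓ hℓ => hint' ℓ' hℓ' ℓ hℓ)
    _ = ∑ ℓ' ∈ range L, ∑ ℓ ∈ range L,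
          (a ℓ' * b ℓ) * (if ℓ = ℓ' then ((ρ ℓ : ℝ) : ℂ) else 0) := by
        refine Finset.sum_congr rfl fun ℓ' hℓ' => Finset.sum_congr rfl fun ℓ hℓ => ?_
        rw [integral_const_mul, hcov ℓ ℓ' (mem_range.mp hℓ) (mem_range.mp hℓ')]
    _ = ∑ ℓ ∈ range L, (a ℓ * b ℓ) * ((ρ ℓ : ℝ) : ℂ) := by
        refine Finset.sum_congr rfl fun ℓ' hℓ' => ?_
        simp only [mul_ite, mul_zero]
        rw [Finset.sum_ite_eq' (range L) ℓ' (fun ℓ => (a ℓ' * b ℓ) * ((ρ ℓ : ℝ) : ℂ))]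
        simp [hℓ']
    _ = ∑ ℓ ∈ range L, ((ℓ : ℂ) / (N : ℂ)) * ((ρ ℓ : ℝ) : ℂ) := by
        refine Finset.sum_congr rfl fun ℓ hℓ => ?_
        have hℓL : ℓ < L := mem_range.mp hℓ
        have hbℓ : b ℓ = (1 / (N : ℂ)) * (ℓ : ℂ) *
            Complex.exp (2 * (Real.pi : ℂ) * Complex.I * (-((ℓ * p : ℕ) : ℂ)) / (N : ℂ)) := by
          rw [hb]
          have : ∀ n : ℕ, Complex.exp (2 * (Real.pi : ℂ) * Complex.I *
              ((((n * p : ℕ) : ℤ) - ((ℓ * p : ℕ) : ℤ) - ((n * p : ℕ) : ℤ) : ℤ) : ℂ) / (N : ℂ))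
              = Complex.exp (2 * (Real.pi : ℂ) * Complex.I * (-((ℓ * p : ℕ) : ℂ)) / (N : ℂ)) := by
            intro n
            congr 1
            push_cast
            ring
          simp only [this]
          have hcount : (∑ n ∈ range N, (if n < ℓ then (1:ℂ) else 0)) = (ℓ : ℂ) := by
            rw [← Finset.sum_subset (Finset.range_subset_range.mpr (le_trans hℓL.le hLN))
              (fun n _ hn => by
                rw [if_neg]; intro hlt; exact hn (mem_range.mpr hlt))]
            rw [Finset.sum_ite_of_true (fun n hn => mem_range.mp hn)]
            simp
          rw [← Finset.mul_sum, hcount]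
          ring
        have habℓ : a ℓ * b ℓ = (ℓ : ℂ) / (N : ℂ) := by
          rw [hbℓ, ha]
          simp only
          rw [← Complex.exp_conj]
          rw [← mul_assoc, mul_comm _ ((1 / (N:ℂ)) * (ℓ:ℂ)), mul_assoc, ← Complex.exp_add]
          have : (starRingEnd ℂ) (-(2 * (Real.pi : ℂ) * Complex.I * (ℓ : ℂ) * (p : ℂ)) / (N : ℂ))
              + 2 * (Real.pi : ℂ) * Complex.I * (-((ℓ * p : ℕ) : ℂ)) / (N : ℂ) = 0 := by
            simp only [map_div₀, map_neg, map_mul, Complex.conj_I, Complex.conj_ofNat,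
              Complex.conj_natCast, Complex.conj_ofReal]
            push_cast
            field_simp
            ring
          rw [this, Complex.exp_zero, mul_one]
          ring
        rw [habℓ]
    _ = ((∑ ℓ ∈ range L, (ℓ : ℝ) * ρ ℓ : ℝ) : ℂ) / (N : ℂ) := by
        push_cast
        rw [Finset.sum_div]
        exact Finset.sum_congr rfl fun ℓ _ => by ring
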